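/- For all real parameters λ > 0 with λ ≠ 1 and φ > 0, and every u with 0 < u < 1, the value Q(u) = (log( (log λ) / log(u(1 − λ) + λ) ))^(1/φ) is a well-defined nonnegative real number (i.e. u(1 − λ) + λ > 0 and (log λ)/log(u(1 − λ) + λ) ≥ 1) and satisfies F(Q(u)) = u, where F is the SMPtW cumulative distribution function. -/

import Mathlib

open Real

/-- The SMPtW cumulative distribution function. -/
noncomputable def smptwCDF (lam phi y : ℝ) : ℝ :=
  (Real.exp (Real.log lam * Real.exp (-(y ^ phi))) - lam) / (1 - lam)

/-- The SMPtW quantile function. -/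
noncomputable def smptwQuantile (lam phi u : ℝ) : ℝ :=
  (Real.log (Real.log lam / Real.log (u * (1 - lam) + lam))) ^ (1 / phi)

/-- the quantile function is a well-defined nonnegative real number
(i.e. `u(1 − λ) + λ > 0` and `(log λ)/log(u(1 − λ) + λ) ≥ 1`) and satisfies `F (Q u) = u`. -/
theorem smptw_quantile_wellDefined_and_inverts (lam phi : ℝ)
    (hlam : 0 < lam) (hlam1 : lam ≠ 1) (hphi : 0 < phi)
    (u : ℝ) (hu0 : 0 < u) (hu1 : u < 1) :
    0 < u * (1 - lam) + lam ∧
    1 ≤ Real.log lam / Real.log (u * (1 - lam) + lam) ∧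
    0 ≤ smptwQuantile lam phi u ∧
    smptwCDF lam phi (smptwQuantile lam phi u) = u := by
  set t : ℝ := u * (1 - lam) + lam with ht
  have ht0 : 0 < t := by
    rcases lt_or_gt_of_ne hlam1 with h | h
    · nlinarith
    · nlinarith
  have hlogt_ne : Real.log t ≠ 0 := by
    rcases lt_or_gt_of_ne hlam1 with h | h
    · have ht1 : t < 1 := by nlinarith
      exact ne_of_lt (Real.log_neg ht0 ht1)
    · have ht1 : 1 < t := by nlinarith
      exact ne_of_gt (Real.log_pos ht1)
  have hR : 1 ≤ Real.log lam / Real.log t := by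
    rcases lt_or_gt_of_ne hlam1 with h | h
    · have ht1 : t < 1 := by nlinarith
      have hlt : Real.log t < 0 := Real.log_neg ht0 ht1
      have hle : Real.log lam ≤ Real.log t := Real.log_le_log hlam (by nlinarith)
      rw [le_div_iff_of_neg hlt]
      linarith
    · have ht1 : 1 < t := by nlinarith
      have hlt : 0 < Real.log t := Real.log_pos ht1
      have hle : Real.log t ≤ Real.log lam := Real.log_le_log ht0 (by nlinarith)
      rw [le_div_iff₀ hlt]
      linarith
  set R : ℝ := Real.log lam / Real.log t with hRdef
  have hlogR : 0 ≤ Real.log R := Real.log_nonneg hR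
  have hQ0 : 0 ≤ smptwQuantile lam phi u := by
    rw [smptwQuantile]
    exact Real.rpow_nonneg hlogR _
  refine ⟨ht0, hR, hQ0, ?_⟩
  have hloglam : Real.log lam ≠ 0 := by
    intro h
    rcases (Real.log_eq_zero.mp h) with h | h | h <;> [linarith; exact hlam1 h; linarith]
  have h1lam : (1 : ℝ) - lam ≠ 0 := sub_ne_zero.mpr (Ne.symm hlam1)
  have hQpow : (smptwQuantile lam phi u) ^ phi = Real.log R := by
    rw [smptwQuantile, ← Real.rpow_mul hlogR, one_div_mul_cancel (ne_of_gt hphi),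
      Real.rpow_one]
  rw [smptwCDF, hQpow]
  have hRpos : 0 < R := lt_of_lt_of_le one_pos hR
  rw [Real.exp_neg, Real.exp_log hRpos]
  have : Real.log lam * R⁻¹ = Real.log t := by
    field_simp [hRdef, hloglam]
    rw [hRdef, div_mul_cancel₀ _ hlogt_ne]
  rw [this, Real.exp_log ht0]
  field_simp [ht, h1lam]
  rw [ht]; ring
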